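/- Let λ₁, λ₂ > 0 and let W have the Skellam(λ₁,λ₂) distribution. Then for every bounded function f : ℤ → ℝ, E[λ₁ f(W+1) − W f(W) − λ₂ f(W−1)] = 0. -/

import Mathlib

open MeasureTheory ProbabilityTheory Real
open scoped NNReal

namespace SkellamAux

lemma pmf_apply (r : ℝ≥0) (n : ℕ) :
    poissonPMF r n = ENNReal.ofReal (poissonPMFReal r n) := rfl

lemma meas_eq (r : ℝ≥0) : poissonMeasure r = (poissonPMF r).toMeasure := by
  rw [Measure.ext_iff_singleton]
  intro n
  rw [poissonMeasure_singleton, PMF.toMeasure_apply_singleton _ _ (MeasurableSet.singleton n),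
    pmf_apply]
  rfl

lemma bdd_integrable {α : Type*} [MeasurableSpace α] [Countable α] [MeasurableSingletonClass α]
    (μ : Measure α) [IsFiniteMeasure μ] (g : α → ℝ) (C : ℝ) (h : ∀ a, |g a| ≤ C) :
    Integrable g μ :=
  Integrable.mono' (integrable_const C) Measurable.of_discrete.aestronglyMeasurable
    (Filter.Eventually.of_forall fun a => by simpa using h a)

lemma summable_pmf_mul (r : ℝ≥0) : Summable (fun n : ℕ => poissonPMFReal r n * n) := by
  have h2 : Summable (fun n : ℕ => Real.exp (-(r : ℝ)) * ((2 * (r : ℝ)) ^ n / n.factorial)) :=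
    (Real.summable_pow_div_factorial (2 * (r : ℝ))).mul_left _
  refine Summable.of_nonneg_of_le (fun n => by
    have := poissonPMFReal_nonneg (r := r) (n := n); positivity) (fun n => ?_) h2
  unfold poissonPMFReal
  have hn : (n : ℝ) ≤ 2 ^ n := by exact_mod_cast (Nat.lt_two_pow_self (n := n)).le
  have key : ((r : ℝ)) ^ n * n ≤ (2 * (r : ℝ)) ^ n := by
    rw [mul_pow, mul_comm ((2:ℝ)^n)]
    calc ((r:ℝ)) ^ n * n ≤ (r:ℝ) ^ n * 2 ^ n := by
          exact mul_le_mul_of_nonneg_left hn (by positivity)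
      _ = _ := rfl
  calc Real.exp (-(r:ℝ)) * (r:ℝ) ^ n / n.factorial * n
      = Real.exp (-(r:ℝ)) * (((r:ℝ) ^ n * n) / n.factorial) := by ring
    _ ≤ Real.exp (-(r:ℝ)) * ((2 * (r:ℝ)) ^ n / n.factorial) := by gcongr

lemma int_id (r : ℝ≥0) : Integrable (fun n : ℕ => (n : ℝ)) (poissonMeasure r) := by
  refine ⟨Measurable.of_discrete.aestronglyMeasurable, ?_⟩
  rw [hasFiniteIntegral_iff_norm, lintegral_countable']
  have h1 : ∀ n : ℕ, ENNReal.ofReal ‖(n : ℝ)‖ * (poissonMeasure r) {n}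
      = ENNReal.ofReal (poissonPMFReal r n * n) := by
    intro n
    rw [show (poissonMeasure r) {n} = poissonPMF r n by
      rw [meas_eq]; exact PMF.toMeasure_apply_singleton _ _ (MeasurableSet.singleton n), pmf_apply,
      ← ENNReal.ofReal_mul (norm_nonneg _)]
    congr 1
    rw [Real.norm_natCast, mul_comm]
  rw [tsum_congr h1, ← ENNReal.ofReal_tsum_of_nonneg
    (fun n => by have := poissonPMFReal_nonneg (r := r) (n := n); positivity)
    (summable_pmf_mul r)]
  exact ENNReal.ofReal_lt_top

lemma key_id (r : ℝ≥0) (n : ℕ) :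
    poissonPMFReal r (n + 1) * ((n : ℝ) + 1) = r * poissonPMFReal r n := by
  unfold poissonPMFReal
  rw [Nat.factorial_succ, pow_succ]
  have h1 : (n.factorial : ℝ) ≠ 0 := by exact_mod_cast n.factorial_pos.ne'
  have h2 : (n : ℝ) + 1 ≠ 0 := by positivity
  push_cast
  field_simp

lemma stein (r : ℝ≥0) (h : ℕ → ℝ) (C : ℝ) (hb : ∀ n, |h n| ≤ C) :
    ∫ n, (n : ℝ) * h n ∂(poissonMeasure r) = r * ∫ n, h (n + 1) ∂(poissonMeasure r) := by
  have hC : 0 ≤ C := le_trans (abs_nonneg _) (hb 0)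
  have int1 : Integrable (fun n : ℕ => (n : ℝ) * h n) (poissonMeasure r) := by
    refine Integrable.mono' ((int_id r).const_mul C) Measurable.of_discrete.aestronglyMeasurable
      (Filter.Eventually.of_forall fun n => ?_)
    rw [Real.norm_eq_abs, abs_mul, Nat.abs_cast, mul_comm C]
    exact mul_le_mul_of_nonneg_left (hb n) (Nat.cast_nonneg n)
  have int2 : Integrable (fun n : ℕ => h (n + 1)) (poissonMeasure r) :=
    bdd_integrable _ _ C (fun n => hb _)
  rw [show poissonMeasure r = (poissonPMF r).toMeasure from meas_eq r] at int1 int2 ⊢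
  rw [PMF.integral_eq_tsum _ _ int1, PMF.integral_eq_tsum _ _ int2]
  simp only [smul_eq_mul, pmf_apply, ENNReal.toReal_ofReal (poissonPMFReal_nonneg)]
  have Sa : Summable (fun n : ℕ => poissonPMFReal r n * ((n : ℝ) * h n)) := by
    refine Summable.of_norm_bounded (g := fun n => poissonPMFReal r n * n * C)
      ((summable_pmf_mul r).mul_right C) (fun n => ?_)
    rw [Real.norm_eq_abs, abs_mul, abs_mul, Nat.abs_cast,
      abs_of_nonneg poissonPMFReal_nonneg]
    simp only [mul_assoc]
    exact mul_le_mul_of_nonneg_left (mul_le_mul_of_nonneg_left (hb n) (Nat.cast_nonneg n))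
      poissonPMFReal_nonneg
  rw [Summable.tsum_eq_zero_add Sa]
  simp only [Nat.cast_zero, zero_mul, mul_zero, zero_add]
  have : ∀ n : ℕ, poissonPMFReal r (n + 1) * (((n : ℕ) + 1 : ℕ) * h (n + 1))
      = (r : ℝ) * (poissonPMFReal r n * h (n + 1)) := by
    intro n
    push_cast
    rw [← mul_assoc, key_id r n, mul_assoc]
  calc ∑' n : ℕ, poissonPMFReal r (n + 1) * (((n + 1 : ℕ) : ℝ) * h (n + 1))
      = ∑' n : ℕ, (r : ℝ) * (poissonPMFReal r n * h (n + 1)) := by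
        refine tsum_congr fun n => ?_
        push_cast
        rw [← mul_assoc, key_id r n, mul_assoc]
    _ = (r : ℝ) * ∑' n : ℕ, poissonPMFReal r n * h (n + 1) := tsum_mul_left

end SkellamAux



/-- The Skellam distribution: law of `X - Y` for `X, Y` independent Poisson random
variables with rates `l1` and `l2`. -/
noncomputable def skellamMeasure (l1 l2 : ℝ) : Measure ℤ :=
  ((poissonMeasure l1.toNNReal).prod (poissonMeasure l2.toNNReal)).map
    (fun p => (p.1 : ℤ) - (p.2 : ℤ))

/-- Kolmogorov–Smirnov distance between two real random variables on `Ω`. -/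
noncomputable def dKS {Ω : Type*} [MeasurableSpace Ω] (μ : Measure Ω) (X Z : Ω → ℝ) : ℝ :=
  ⨆ x : ℝ, |(μ {ω | X ω ≤ x}).toReal - (μ {ω | Z ω ≤ x}).toReal|

/-- Kolmogorov–Smirnov distance between two distributions on `ℤ`. -/
noncomputable def dKSZ (μ1 μ2 : Measure ℤ) : ℝ :=
  ⨆ x : ℝ, |(μ1 {k : ℤ | (k : ℝ) ≤ x}).toReal - (μ2 {k : ℤ | (k : ℝ) ≤ x}).toReal|

/-- Kolmogorov–Smirnov distance between two distributions on `ℝ`. -/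
noncomputable def dKSR (μ1 μ2 : Measure ℝ) : ℝ :=
  ⨆ x : ℝ, |(μ1 {y : ℝ | y ≤ x}).toReal - (μ2 {y : ℝ | y ≤ x}).toReal|

/-- Modified Bessel function of the first kind, of integer order `k`. -/
noncomputable def besselI (k : ℤ) (z : ℝ) : ℝ :=
  ∑' j : ℕ, (z / 2) ^ (2 * j + k.natAbs) /
    ((Nat.factorial j : ℝ) * (Nat.factorial (j + k.natAbs) : ℝ))

/-- If `W ~ Skellam(λ₁, λ₂)` then for every bounded `f : ℤ → ℝ`,
`E[λ₁ f(W+1) − W f(W) − λ₂ f(W−1)] = 0`. -/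
theorem stmt_1 {Ω : Type*} [MeasurableSpace Ω] (μ : Measure Ω) [IsProbabilityMeasure μ]
    (l1 l2 : ℝ) (hl1 : 0 < l1) (hl2 : 0 < l2)
    (W : Ω → ℤ) (hW : Measurable W) (hlaw : μ.map W = skellamMeasure l1 l2)
    (f : ℤ → ℝ) (hf : ∃ C, ∀ k : ℤ, |f k| ≤ C) :
    ∫ ω, (l1 * f (W ω + 1) - (W ω : ℝ) * f (W ω) - l2 * f (W ω - 1)) ∂μ = 0 := by
  obtain ⟨C, hC⟩ := hf
  have hC0 : 0 ≤ C := le_trans (abs_nonneg _) (hC 0)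
  set r1 : ℝ≥0 := l1.toNNReal with hr1def
  set r2 : ℝ≥0 := l2.toNNReal with hr2def
  have hr1 : (r1 : ℝ) = l1 := Real.coe_toNNReal _ hl1.le
  have hr2 : (r2 : ℝ) = l2 := Real.coe_toNNReal _ hl2.le
  set P1 := poissonMeasure r1
  set P2 := poissonMeasure r2
  set G : ℤ → ℝ := fun k => l1 * f (k + 1) - (k : ℝ) * f k - l2 * f (k - 1) with hG
  have step1 : ∫ ω, G (W ω) ∂μ = ∫ k, G k ∂(skellamMeasure l1 l2) := by
    rw [← hlaw]
    exact (integral_map hW.aemeasurable Measurable.of_discrete.aestronglyMeasurable).symm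
  have step2 : ∫ k, G k ∂(skellamMeasure l1 l2)
      = ∫ p : ℕ × ℕ, G ((p.1 : ℤ) - (p.2 : ℤ)) ∂(P1.prod P2) :=
    integral_map Measurable.of_discrete.aemeasurable
      Measurable.of_discrete.aestronglyMeasurable
  -- the four pieces
  set F1 : ℕ × ℕ → ℝ := fun p => l1 * f ((p.1 : ℤ) - (p.2 : ℤ) + 1) with hF1
  set F2 : ℕ × ℕ → ℝ := fun p => (p.1 : ℝ) * f ((p.1 : ℤ) - (p.2 : ℤ)) with hF2
  set F2' : ℕ × ℕ → ℝ := fun p => (p.2 : ℝ) * f ((p.1 : ℤ) - (p.2 : ℤ)) with hF2'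
  set F3 : ℕ × ℕ → ℝ := fun p => l2 * f ((p.1 : ℤ) - (p.2 : ℤ) - 1) with hF3
  have int_fst : Integrable (fun p : ℕ × ℕ => (p.1 : ℝ)) (P1.prod P2) := by
    have h' : Integrable (fun n : ℕ => (n : ℝ)) (Measure.map Prod.fst (P1.prod P2)) := by
      rw [Measure.map_fst_prod]
      simpa [measure_univ] using SkellamAux.int_id r1
    exact (integrable_map_measure Measurable.of_discrete.aestronglyMeasurable
      measurable_fst.aemeasurable).mp h'
  have int_snd : Integrable (fun p : ℕ × ℕ => (p.2 : ℝ)) (P1.prod P2) := by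
    have h' : Integrable (fun n : ℕ => (n : ℝ)) (Measure.map Prod.snd (P1.prod P2)) := by
      rw [Measure.map_snd_prod]
      simpa [measure_univ] using SkellamAux.int_id r2
    exact (integrable_map_measure Measurable.of_discrete.aestronglyMeasurable
      measurable_snd.aemeasurable).mp h'
  have hi1 : Integrable F1 (P1.prod P2) :=
    SkellamAux.bdd_integrable _ _ (|l1| * C) (fun p => by
      rw [hF1, abs_mul]; exact mul_le_mul_of_nonneg_left (hC _) (abs_nonneg _))
  have hi3 : Integrable F3 (P1.prod P2) :=
    SkellamAux.bdd_integrable _ _ (|l2| * C) (fun p => by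
      rw [hF3, abs_mul]; exact mul_le_mul_of_nonneg_left (hC _) (abs_nonneg _))
  have hi2 : Integrable F2 (P1.prod P2) := by
    refine Integrable.mono' (int_fst.const_mul C) Measurable.of_discrete.aestronglyMeasurable
      (Filter.Eventually.of_forall fun p => ?_)
    rw [Real.norm_eq_abs, hF2, abs_mul, Nat.abs_cast, mul_comm C]
    exact mul_le_mul_of_nonneg_left (hC _) (Nat.cast_nonneg _)
  have hi2' : Integrable F2' (P1.prod P2) := by
    refine Integrable.mono' (int_snd.const_mul C) Measurable.of_discrete.aestronglyMeasurable
      (Filter.Eventually.of_forall fun p => ?_)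
    rw [Real.norm_eq_abs, hF2', abs_mul, Nat.abs_cast, mul_comm C]
    exact mul_le_mul_of_nonneg_left (hC _) (Nat.cast_nonneg _)
  have e1 : ∫ p, F2 p ∂(P1.prod P2) = ∫ p, F1 p ∂(P1.prod P2) := by
    rw [integral_prod_symm _ hi2, integral_prod_symm _ hi1]
    refine integral_congr_ae (Filter.Eventually.of_forall fun y => ?_)
    simp only [hF1, hF2]
    rw [SkellamAux.stein r1 (fun m => f ((m : ℤ) - (y : ℤ))) C (fun m => hC _), hr1,
      integral_const_mul]
    congr 1
    refine integral_congr_ae (Filter.Eventually.of_forall fun x => ?_)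
    congr 1
    push_cast
    ring
  have e2 : ∫ p, F2' p ∂(P1.prod P2) = ∫ p, F3 p ∂(P1.prod P2) := by
    rw [integral_prod _ hi2', integral_prod _ hi3]
    refine integral_congr_ae (Filter.Eventually.of_forall fun x => ?_)
    simp only [hF2', hF3]
    rw [SkellamAux.stein r2 (fun m => f ((x : ℤ) - (m : ℤ))) C (fun m => hC _), hr2,
      integral_const_mul]
    congr 1
    refine integral_congr_ae (Filter.Eventually.of_forall fun y => ?_)
    congr 1
    push_cast
    ring
  have split : ∫ p : ℕ × ℕ, G ((p.1 : ℤ) - (p.2 : ℤ)) ∂(P1.prod P2)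
      = ∫ p, F1 p ∂(P1.prod P2) - (∫ p, F2 p ∂(P1.prod P2) - ∫ p, F2' p ∂(P1.prod P2))
        - ∫ p, F3 p ∂(P1.prod P2) := by
    have : (fun p : ℕ × ℕ => G ((p.1 : ℤ) - (p.2 : ℤ)))
        = fun p => F1 p - (F2 p - F2' p) - F3 p := by
      funext p
      simp only [hG, hF1, hF2, hF2', hF3]
      push_cast
      ring
    have h23 : Integrable (fun p : ℕ × ℕ => F2 p - F2' p) (P1.prod P2) := hi2.sub hi2'
    have h123 : Integrable (fun p : ℕ × ℕ => F1 p - (F2 p - F2' p)) (P1.prod P2) :=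
      hi1.sub h23
    rw [this, integral_sub h123 hi3, integral_sub hi1 h23, integral_sub hi2 hi2']
  have final : ∫ ω, G (W ω) ∂μ = 0 := by
    rw [step1, step2, split, e1, e2]
    ring
  exact final
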